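/- Suppose $2 \leq d < \omega$ and $2^{\aleph_0} \leq \aleph_{d-1}$. Then for every sequence $X_0, \ldots, X_{d-1}$ of perfect Polish spaces there is a coloring $c : \prod_{i<d} X_i \to \omega$ such that for every somewhere-DDF set $Y \subseteq \prod_{i<d} X_i$, the image $c[Y]$ is infinite. -/

import Mathlib

open Cardinal Set

section Prelim

variable {α : Type*}

/-- A set with arbitrarily large finite subsets is infinite. -/
lemma infinite_of_forall_finset {S : Set α}
    (h : ∀ k : ℕ, ∃ F : Finset α, ↑F ⊆ S ∧ F.card = k) : S.Infinite := by
  by_contra hfin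
  rw [Set.not_infinite] at hfin
  obtain ⟨F, hFS, hFcard⟩ := h (hfin.toFinset.card + 1)
  have : F ⊆ hfin.toFinset := fun x hx => hfin.mem_toFinset.2 (hFS hx)
  have := Finset.card_le_card this
  omega

/-- In a T1 space in which `univ` is perfect, every set dense in a nonempty open
set is infinite. -/
lemma dense_in_open_infinite {X : Type*} [TopologicalSpace X] [T1Space X]
    (hperf : Perfect (Set.univ : Set X)) {U S : Set X} (hU : IsOpen U)
    (hUne : U.Nonempty) (hS : U ⊆ closure S) : S.Infinite := by
  by_contra hfin
  rw [Set.not_infinite] at hfin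
  have hclosed : closure S = S := hfin.isClosed.closure_eq
  have hUS : U ⊆ S := by rwa [hclosed] at hS
  obtain ⟨x, hx⟩ := hUne
  have hacc := hperf.acc x (Set.mem_univ x)
  rw [accPt_iff_nhds] at hacc
  have hVopen : IsOpen (U \ (S \ {x})) := hU.sdiff ((hfin.subset diff_subset).isClosed)
  have hVmem : U \ (S \ {x}) ∈ nhds x := hVopen.mem_nhds ⟨hx, fun h => h.2 rfl⟩
  obtain ⟨y, ⟨hy1, _⟩, hy2⟩ := hacc _ hVmem
  exact hy2 (by_contra fun hne => hy1.2 ⟨hUS hy1.1, hne⟩)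

/-- A second countable T0 space has cardinality at most continuum. -/
lemma mk_le_continuum_of_secondCountable (X : Type*) [TopologicalSpace X]
    [SecondCountableTopology X] [T0Space X] :
    #X ≤ Cardinal.continuum := by
  obtain ⟨b, hbc, -, hbasis⟩ := TopologicalSpace.exists_countable_basis X
  have hinj : Function.Injective (fun x : X => {s : ↥b | x ∈ s.1}) := by
    intro x y hxy
    have hxy' : ∀ s : ↥b, x ∈ s.1 ↔ y ∈ s.1 := fun s => by
      exact Set.ext_iff.1 hxy s
    refine (inseparable_iff_forall_isOpen.2 fun s hs => ?_).eq
    constructor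
    · intro hxs
      obtain ⟨t, htb, hxt, hts⟩ := hbasis.exists_subset_of_mem_open hxs hs
      exact hts ((hxy' ⟨t, htb⟩).1 hxt)
    · intro hys
      obtain ⟨t, htb, hyt, hts⟩ := hbasis.exists_subset_of_mem_open hys hs
      exact hts ((hxy' ⟨t, htb⟩).2 hyt)
  calc #X ≤ #(Set ↥b) := Cardinal.mk_le_of_injective hinj
    _ = 2 ^ #↥b := Cardinal.mk_set
    _ ≤ 2 ^ ℵ₀ := by
        exact Cardinal.power_le_power_left (by norm_num) (Cardinal.mk_le_aleph0_iff.2 hbc.to_subtype)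
    _ = Cardinal.continuum := Cardinal.two_power_aleph0

/-- Extract an injection-on from a countable set. -/
lemma exists_injOn_nat {s : Set α} (h : s.Countable) :
    ∃ f : α → ℕ, Set.InjOn f s := by
  haveI := h.to_subtype
  obtain ⟨g, hg⟩ := exists_injective_nat ↥s
  classical
  refine ⟨fun x => if hx : x ∈ s then g ⟨x, hx⟩ else 0, fun x hx y hy hxy => ?_⟩
  simp only [dif_pos hx, dif_pos hy] at hxy
  exact congrArg Subtype.val (hg hxy)

end Prelim


lemma kuratowski : ∀ (n : ℕ) (X : Fin (n+1) → Type) (S : ∀ i, Set (X i)),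
    (∀ i, #(S i) ≤ Cardinal.aleph n) →
    ∃ A : Fin (n+1) → Set (∀ i, X i),
      (∀ p, (∀ i, p i ∈ S i) → ∃ i, p ∈ A i) ∧
      (∀ (i : Fin (n+1)) (f : ∀ j, X j),
        {t : X i | Function.update f i t ∈ A i}.Countable) := by
  intro n
  induction n with
  | zero =>
    intro X S hS
    classical
    refine ⟨fun _ => {p | p 0 ∈ S 0}, fun p hp => ⟨0, hp 0⟩, ?_⟩
    intro i f
    have hi : i = 0 := by omega
    subst hi
    have : {t : X 0 | Function.update f 0 t ∈ {p : ∀ j, X j | p 0 ∈ S 0}} = S 0 := by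
      ext t; simp [Function.update_self]
    rw [this, Set.countable_coe_iff.symm]
    have h0 : #(S 0) ≤ ℵ₀ := by
      have := hS 0
      rwa [Nat.cast_zero, Cardinal.aleph_zero] at this
    exact Cardinal.mk_le_aleph0_iff.1 h0
  | succ n IH =>
    intro X S hS
    classical
    have hκsucc : Cardinal.aleph (↑(n+1) : Ordinal) =
        Order.succ (Cardinal.aleph (↑n : Ordinal)) := by
      rw [Nat.cast_succ, Ordinal.add_one_eq_succ, Cardinal.aleph_succ]
    have hmkW : #(Cardinal.aleph (↑(n+1) : Ordinal)).ord.ToType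
        = Cardinal.aleph (↑(n+1) : Ordinal) := by
      rw [Cardinal.mk_toType, Cardinal.card_ord]
    have hseg : ∀ b : (Cardinal.aleph (↑(n+1) : Ordinal)).ord.ToType,
        #{w | w ≤ b} ≤ Cardinal.aleph (↑n : Ordinal) := by
      intro b
      have h1 : #(Set.Iio b) < Cardinal.aleph (↑(n+1) : Ordinal) :=
        Cardinal.mk_Iio_ord_toType b
      have h1' : #(Set.Iio b) ≤ Cardinal.aleph (↑n : Ordinal) :=
        Order.lt_succ_iff.1 (lt_of_lt_of_le h1 (le_of_eq hκsucc))
      have h2 : {w | w ≤ b} = insert b (Set.Iio b) := by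
        ext w; simp [Set.mem_setOf_eq, le_iff_lt_or_eq, or_comm]
      calc #{w | w ≤ b} ≤ #(Set.Iio b) + 1 := by rw [h2]; exact Cardinal.mk_insert_le
        _ ≤ Cardinal.aleph (↑n : Ordinal) + 1 := add_le_add_left h1' 1
        _ = Cardinal.aleph (↑n : Ordinal) :=
            Cardinal.add_one_of_aleph0_le (Cardinal.aleph0_le_aleph _)
    have hr : ∀ i : Fin (n+2), ∃ ri : ↥(S i) →
        (Cardinal.aleph (↑(n+1) : Ordinal)).ord.ToType, Function.Injective ri := by
      intro i
      have : #(S i) ≤ #(Cardinal.aleph (↑(n+1) : Ordinal)).ord.ToType := by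
        rw [hmkW]; exact hS i
      obtain ⟨e⟩ := (Cardinal.le_def _ _).1 this
      exact ⟨e, e.injective⟩
    choose r hrinj using hr
    have hIH : ∀ (c : Fin (n+2)) (b : (Cardinal.aleph (↑(n+1) : Ordinal)).ord.ToType),
        ∃ B : Fin (n+1) → Set (∀ j : Fin (n+1), X (c.succAbove j)),
          (∀ p, (∀ j, p j ∈ {x : X (c.succAbove j) |
              ∃ h : x ∈ S (c.succAbove j), r (c.succAbove j) ⟨x, h⟩ ≤ b}) →
            ∃ j, p ∈ B j) ∧
          (∀ (j : Fin (n+1)) (f : ∀ j', X (c.succAbove j')),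
            {t | Function.update f j t ∈ B j}.Countable) := by
      intro c b
      apply IH
      intro j
      refine le_trans ?_ (hseg b)
      apply Cardinal.mk_le_of_injective
        (f := fun x => (⟨r (c.succAbove j) ⟨x.1, x.2.choose⟩, x.2.choose_spec⟩ :
          {w | w ≤ b}))
      intro x y hxy
      have h1 := hrinj (c.succAbove j) (Subtype.ext_iff.1 hxy)
      have h2 : (x : X (c.succAbove j)) = y := Subtype.mk_eq_mk.1 h1
      exact Subtype.ext h2
    choose B hBcov hBsec using hIH
    have hexists : ∀ (p : ∀ i, X i) (H : ∀ j, p j ∈ S j),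
        ∃ c : Fin (n+2), ∃ b : (Cardinal.aleph (↑(n+1) : Ordinal)).ord.ToType,
          (∀ j, r j ⟨p j, H j⟩ ≤ b) ∧ r c ⟨p c, H c⟩ = b ∧
          (∀ j, r j ⟨p j, H j⟩ = b → c ≤ j) := by
      intro p H
      have hne : (Finset.univ.filter (fun j => r j ⟨p j, H j⟩ =
          Finset.univ.sup' Finset.univ_nonempty (fun j => r j ⟨p j, H j⟩))).Nonempty := by
        obtain ⟨c, -, hc⟩ := Finset.exists_mem_eq_sup' Finset.univ_nonempty
          (fun j => r j ⟨p j, H j⟩)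
        exact ⟨c, Finset.mem_filter.2 ⟨Finset.mem_univ c, hc.symm⟩⟩
      refine ⟨(Finset.univ.filter (fun j => r j ⟨p j, H j⟩ =
          Finset.univ.sup' Finset.univ_nonempty (fun j => r j ⟨p j, H j⟩))).min' hne,
        Finset.univ.sup' Finset.univ_nonempty (fun j => r j ⟨p j, H j⟩),
        fun j => Finset.le_sup' (fun j => r j ⟨p j, H j⟩) (Finset.mem_univ j), ?_, ?_⟩
      · have := Finset.min'_mem _ hne
        exact (Finset.mem_filter.1 this).2
      · intro j hj
        exact Finset.min'_le _ j (Finset.mem_filter.2 ⟨Finset.mem_univ j, hj⟩)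
    choose istar Mf hub hach hmin using hexists
    refine ⟨fun i => {p | ∃ H : ∀ j, p j ∈ S j, ∃ jdx : Fin (n+1),
        (istar p H).succAbove jdx = i ∧
        (fun j => p ((istar p H).succAbove j)) ∈ B (istar p H) (Mf p H) jdx},
      ?_, ?_⟩
    · -- cover
      intro p H
      have H' : ∀ j : Fin (n+1), p ((istar p H).succAbove j) ∈
          {x : X ((istar p H).succAbove j) |
            ∃ h : x ∈ S ((istar p H).succAbove j),
              r ((istar p H).succAbove j) ⟨x, h⟩ ≤ Mf p H} :=
        fun j => ⟨H _, hub p H _⟩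
      obtain ⟨jdx, hjdx⟩ := hBcov (istar p H) (Mf p H) _ H'
      exact ⟨(istar p H).succAbove jdx, H, jdx, rfl, hjdx⟩
    · -- sections
      intro i f
      by_cases hf : ∀ j, j ≠ i → f j ∈ S j
      · have hWne : Nonempty (Cardinal.aleph (↑(n+1) : Ordinal)).ord.ToType := by
          rw [← Cardinal.mk_ne_zero_iff, hmkW]
          exact ne_of_gt (lt_of_lt_of_le Cardinal.aleph0_pos (Cardinal.aleph0_le_aleph _))
        obtain ⟨M', c₀, hc₀i, hubf, hc₀, hminf⟩ :
            ∃ M', ∃ c₀ : Fin (n+2), ∃ hc₀i : c₀ ≠ i,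
              (∀ j (h : j ≠ i), r j ⟨f j, hf j h⟩ ≤ M') ∧
              r c₀ ⟨f c₀, hf c₀ hc₀i⟩ = M' ∧
              (∀ j (h : j ≠ i), r j ⟨f j, hf j h⟩ = M' → c₀ ≤ j) := by
          have herase : (Finset.univ.erase i).Nonempty :=
            ⟨i.succAbove 0, Finset.mem_erase.2 ⟨Fin.succAbove_ne i 0, Finset.mem_univ _⟩⟩
          have hkey : ∀ j ∈ Finset.univ.erase i, ∀ (h : j ≠ i), True := fun _ _ _ => trivial
          -- use the function g with a dummy value at i
          obtain ⟨g, hgdef⟩ : ∃ g : Fin (n+2) → (Cardinal.aleph (↑(n+1) : Ordinal)).ord.ToType,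
              ∀ j (h : j ≠ i), g j = r j ⟨f j, hf j h⟩ := by
            refine ⟨fun j => if h : j ≠ i then r j ⟨f j, hf j h⟩ else Classical.arbitrary _,
              fun j h => dif_pos h⟩
          have hfilterne : ((Finset.univ.erase i).filter
              (fun j => g j = (Finset.univ.erase i).sup' herase g)).Nonempty := by
            obtain ⟨c, hc, hceq⟩ := Finset.exists_mem_eq_sup' herase g
            exact ⟨c, Finset.mem_filter.2 ⟨hc, hceq.symm⟩⟩
          have hc₀mem := Finset.min'_mem _ hfilterne
          rw [Finset.mem_filter, Finset.mem_erase] at hc₀mem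
          have hc₀i : ((Finset.univ.erase i).filter
              (fun j => g j = (Finset.univ.erase i).sup' herase g)).min' hfilterne ≠ i :=
            hc₀mem.1.1
          refine ⟨(Finset.univ.erase i).sup' herase g, _, hc₀i, ?_, ?_, ?_⟩
          · intro j h
            rw [← hgdef j h]
            exact Finset.le_sup' g (Finset.mem_erase.2 ⟨h, Finset.mem_univ j⟩)
          · rw [← hgdef _ hc₀i]
            exact hc₀mem.2
          · intro j h hj
            apply Finset.min'_le
            rw [Finset.mem_filter, Finset.mem_erase]
            exact ⟨⟨h, Finset.mem_univ j⟩, by rw [hgdef j h]; exact hj⟩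
        obtain ⟨j₀, hj₀⟩ := Fin.exists_succAbove_eq (Ne.symm hc₀i)
        subst hj₀
        apply Set.Countable.mono ?_ (hBsec c₀ M' j₀ (fun j => f (c₀.succAbove j)))
        intro t ht
        obtain ⟨H, jdx, hjdx, hmem⟩ := ht
        have histar_ne : istar (Function.update f (c₀.succAbove j₀) t) H ≠
            c₀.succAbove j₀ := by
          have h1 := Fin.succAbove_ne (istar (Function.update f (c₀.succAbove j₀) t) H) jdx
          rw [hjdx] at h1
          exact (Ne.symm h1)
        have heq : ∀ j (h : j ≠ c₀.succAbove j₀),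
            r j ⟨Function.update f (c₀.succAbove j₀) t j, H j⟩ = r j ⟨f j, hf j h⟩ := by
          intro j h
          congr 1
          exact Subtype.ext (Function.update_of_ne h t f)
        have hc₀ne : c₀ ≠ c₀.succAbove j₀ := (Fin.succAbove_ne c₀ j₀).symm
        have hMeq : Mf (Function.update f (c₀.succAbove j₀) t) H = M' := by
          apply le_antisymm
          · have h1 := hach (Function.update f (c₀.succAbove j₀) t) H
            rw [heq _ histar_ne] at h1
            rw [← h1]
            exact hubf _ histar_ne
          · have h1 := hub (Function.update f (c₀.succAbove j₀) t) H c₀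
            rwa [heq c₀ hc₀ne, hc₀] at h1
        have histar : istar (Function.update f (c₀.succAbove j₀) t) H = c₀ := by
          apply le_antisymm
          · apply hmin
            rw [heq c₀ hc₀ne, hc₀, hMeq]
          · apply hminf _ histar_ne
            rw [← heq _ histar_ne, hach, hMeq]
        rw [histar] at hjdx
        rw [histar, hMeq] at hmem
        have hjdx' : jdx = j₀ := Fin.succAbove_right_injective (p := c₀) hjdx
        subst hjdx'
        show Function.update (fun j => f (c₀.succAbove j)) jdx t ∈ B c₀ M' jdx
        have hfun : (fun j => Function.update f (c₀.succAbove jdx) t (c₀.succAbove j)) =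
            Function.update (fun j => f (c₀.succAbove j)) jdx t := by
          funext j
          by_cases hj : j = jdx
          · subst hj
            rw [Function.update_self, Function.update_self]
          · rw [Function.update_of_ne hj, Function.update_of_ne]
            exact fun hcontra => hj (Fin.succAbove_right_injective (p := c₀) hcontra)
        rwa [hfun] at hmem
      · push_neg at hf
        obtain ⟨j, hji, hjS⟩ := hf
        have hempty : {t : X i | Function.update f i t ∈
            {p | ∃ H : ∀ j, p j ∈ S j, ∃ jdx : Fin (n+1),
              (istar p H).succAbove jdx = i ∧
              (fun j => p ((istar p H).succAbove j)) ∈ B (istar p H) (Mf p H) jdx}}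
            = ∅ := by
          ext t
          simp only [Set.mem_setOf_eq, Set.mem_empty_iff_false, iff_false]
          rintro ⟨H, -⟩
          exact hjS (by rw [← Function.update_of_ne hji t f]; exact H j)
        rw [hempty]
        exact Set.countable_empty


/-- `IsDDF d X t U Z`: `Z ⊆ ∏_{i<d} U i` is a dense-by-dense-filter (DDF) set,
defined by recursion on `d`. For `d = 0` it means `Z` is nonempty; for `d + 1` it
means that `Z ⊆ ∏ U i`, the projection of `Z` to the first `d` coordinates is DDF,
and the fibers of `Z` over points of this projection generate a filter of subsets
of `X (last d)` that are dense in `U (last d)` (i.e. every finite intersection of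
fibers is dense in `U (last d)`). -/
def IsDDF : (d : ℕ) → (X : Fin d → Type) → (t : ∀ i, TopologicalSpace (X i)) →
    (U : ∀ i, Set (X i)) → (Z : Set (∀ i, X i)) → Prop
  | 0, _, _, _, Z => Z.Nonempty
  | (d + 1), X, t, U, Z =>
      Z ⊆ {f | ∀ i, f i ∈ U i} ∧
      IsDDF d (fun i => X i.castSucc) (fun i => t i.castSucc)
        (fun i => U i.castSucc) (Fin.init '' Z) ∧
      ∀ F : Finset (∀ i : Fin d, X i.castSucc), ↑F ⊆ Fin.init '' Z →
        U (Fin.last d) ⊆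
          @closure _ (t (Fin.last d)) {y | ∀ x ∈ F, Fin.snoc x y ∈ Z}

/-- `Z` is somewhere-DDF: for some nonempty open sets `U i ⊆ X i`, `Z` is a DDF
subset of `∏ U i`. -/
def SomewhereDDF (d : ℕ) (X : Fin d → Type) (t : ∀ i, TopologicalSpace (X i))
    (Z : Set (∀ i, X i)) : Prop :=
  ∃ U : ∀ i, Set (X i), (∀ i, @IsOpen _ (t i) (U i)) ∧ (∀ i, (U i).Nonempty) ∧
    IsDDF d X t U Z

/-- Every DDF set contains arbitrarily large finite grids. -/
lemma ddf_grid : ∀ (d : ℕ) (X : Fin d → Type) (t : ∀ i, TopologicalSpace (X i))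
    (U : ∀ i, Set (X i)) (Z : Set (∀ i, X i)),
    IsDDF d X t U Z →
    (∀ i, @IsOpen _ (t i) (U i)) → (∀ i, (U i).Nonempty) →
    (∀ i, @Perfect _ (t i) (Set.univ : Set (X i))) → (∀ i, @T1Space _ (t i)) →
    ∀ k : ℕ, ∃ C : ∀ i, Finset (X i),
      (∀ i, (C i).card = k) ∧ (∀ p : ∀ i, X i, (∀ i, p i ∈ C i) → p ∈ Z) := by
  intro d
  induction d with
  | zero =>
    intro X t U Z hZ hopen hUne hperf hT1 k
    obtain ⟨z, hz⟩ := hZ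
    exact ⟨fun i => i.elim0, fun i => i.elim0, fun p _ => by
      have : p = z := funext fun i => i.elim0
      rwa [this]⟩
  | succ d IH =>
    intro X t U Z hZ hopen hUne hperf hT1 k
    classical
    obtain ⟨h1, h2, h3⟩ := hZ
    obtain ⟨C', hC'card, hC'grid⟩ := IH (fun i => X i.castSucc) (fun i => t i.castSucc)
      (fun i => U i.castSucc) (Fin.init '' Z) h2
      (fun i => hopen i.castSucc) (fun i => hUne i.castSucc)
      (fun i => hperf i.castSucc) (fun i => hT1 i.castSucc) k
    have hF : ↑(Fintype.piFinset C') ⊆ Fin.init '' Z := by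
      intro x hx
      exact hC'grid x (fun i => (Fintype.mem_piFinset.1 hx) i)
    have hdense := h3 (Fintype.piFinset C') hF
    have hinf : {y | ∀ x ∈ Fintype.piFinset C', Fin.snoc x y ∈ Z}.Infinite :=
      @dense_in_open_infinite _ (t (Fin.last d)) (hT1 (Fin.last d))
        (hperf (Fin.last d)) _ _ (hopen (Fin.last d)) (hUne (Fin.last d)) hdense
    obtain ⟨T, hTsub, hTcard⟩ := hinf.exists_subset_card_eq k
    refine ⟨fun i => Fin.lastCases T C' i, ?_, ?_⟩
    · intro i
      induction i using Fin.lastCases with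
      | last => simpa only [Fin.lastCases_last] using hTcard
      | cast i => simpa only [Fin.lastCases_castSucc] using hC'card i
    · intro p hp
      have hinit : Fin.init p ∈ Fintype.piFinset C' := by
        rw [Fintype.mem_piFinset]
        intro i
        have := hp i.castSucc
        simpa only [Fin.lastCases_castSucc, Fin.init] using this
      have hlast : p (Fin.last d) ∈ T := by
        have := hp (Fin.last d)
        simpa only [Fin.lastCases_last] using this
      have := hTsub hlast (Fin.init p) hinit
      rwa [Fin.snoc_init_self] at this


/-- Counting: if a selector on a `D`-dimensional `K`-grid never admits `> m` points
on a line in its selected direction, then `K ≤ D * m`. -/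
lemma pigeonhole_lines {D K m : ℕ} (hK0 : 0 < K)
    (φ : (Fin (D+1) → Fin K) → Fin (D+1))
    (h : ∀ (i : Fin (D+1)) (u : Fin (D+1) → Fin K),
      (Finset.univ.filter (fun a : Fin K => φ (Function.update u i a) = i)).card ≤ m) :
    K ≤ (D+1) * m := by
  classical
  have hclass : ∀ i : Fin (D+1),
      (Finset.univ.filter (fun v : Fin (D+1) → Fin K => φ v = i)).card ≤ m * K ^ D := by
    intro i
    have himg : ∀ u ∈ Finset.image (fun v => Function.update v i (⟨0, hK0⟩ : Fin K))
        (Finset.univ.filter (fun v : Fin (D+1) → Fin K => φ v = i)),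
        ((Finset.univ.filter (fun v : Fin (D+1) → Fin K => φ v = i)).filter
          (fun v => Function.update v i (⟨0, hK0⟩ : Fin K) = u)).card ≤ m := by
      intro u _
      refine le_trans (Finset.card_le_card_of_injOn (fun v => v i)
        (fun v hv => ?_) ?_) (h i u)
      · simp only [Finset.coe_filter, Finset.mem_coe, Finset.mem_filter, Finset.mem_univ, true_and, Set.mem_setOf_eq] at hv ⊢
        have hvu : v = Function.update u i (v i) := by
          funext j
          by_cases hj : j = i
          · subst hj; rw [Function.update_self]
          · rw [Function.update_of_ne hj, ← hv.2, Function.update_of_ne hj]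
        rw [← hvu]; exact hv.1
      · intro v hv w hw hvw
        simp only [Finset.coe_filter, Set.mem_setOf_eq, Finset.mem_univ, true_and] at hv hw
        funext j
        by_cases hj : j = i
        · subst hj; exact hvw
        · have h1 := congrFun hv.2 j
          have h2 := congrFun hw.2 j
          rw [Function.update_of_ne hj] at h1 h2
          rw [h1, h2]
    have himgcard : (Finset.image (fun v => Function.update v i (⟨0, hK0⟩ : Fin K))
        (Finset.univ.filter (fun v : Fin (D+1) → Fin K => φ v = i))).card ≤ K ^ D := by
      have hsub : Finset.image (fun v => Function.update v i (⟨0, hK0⟩ : Fin K))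
          (Finset.univ.filter (fun v : Fin (D+1) → Fin K => φ v = i)) ⊆
          Finset.univ.filter (fun u : Fin (D+1) → Fin K => u i = ⟨0, hK0⟩) := by
        intro u hu
        obtain ⟨v, -, rfl⟩ := Finset.mem_image.1 hu
        simp [Function.update_self]
      refine le_trans (Finset.card_le_card hsub) ?_
      have : (Finset.univ.filter (fun u : Fin (D+1) → Fin K => u i = ⟨0, hK0⟩)).card
          ≤ Fintype.card ({j : Fin (D+1) // j ≠ i} → Fin K) := by
        refine Finset.card_le_card_of_injOn (fun u => fun j => u j.1) (fun _ _ => Finset.mem_univ _) ?_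
        intro u hu w hw huw
        simp only [Finset.coe_filter, Set.mem_setOf_eq, Finset.mem_univ, true_and] at hu hw
        funext j
        by_cases hj : j = i
        · subst hj; rw [hu, hw]
        · exact congrFun huw ⟨j, hj⟩
      refine le_trans this ?_
      rw [Fintype.card_fun]
      have hcs : Fintype.card {j : Fin (D+1) // j ≠ i} = D := by
        have := Fintype.card_subtype_compl (p := fun j : Fin (D+1) => j = i)
        simp only [Fintype.card_subtype_eq, Fintype.card_fin] at this
        exact this
      rw [hcs, Fintype.card_fin]
    calc (Finset.univ.filter (fun v : Fin (D+1) → Fin K => φ v = i)).card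
        ≤ m * (Finset.image (fun v => Function.update v i (⟨0, hK0⟩ : Fin K))
            (Finset.univ.filter (fun v : Fin (D+1) → Fin K => φ v = i))).card :=
          Finset.card_le_mul_card_image _ m himg
      _ ≤ m * K ^ D := Nat.mul_le_mul_left m himgcard
  have htotal : K ^ (D+1) ≤ (D+1) * (m * K ^ D) := by
    have hsum : (Finset.univ : Finset (Fin (D+1) → Fin K)).card =
        ∑ i : Fin (D+1), (Finset.univ.filter (fun v : Fin (D+1) → Fin K => φ v = i)).card :=
      Finset.card_eq_sum_card_fiberwise (fun v _ => Finset.mem_univ (φ v))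
    have h1 : (Finset.univ : Finset (Fin (D+1) → Fin K)).card = K ^ (D+1) := by
      rw [Finset.card_univ, Fintype.card_fun, Fintype.card_fin, Fintype.card_fin]
    calc K ^ (D+1) = ∑ i : Fin (D+1), (Finset.univ.filter
          (fun v : Fin (D+1) → Fin K => φ v = i)).card := by rw [← h1, hsum]
      _ ≤ ∑ _i : Fin (D+1), m * K ^ D := Finset.sum_le_sum (fun i _ => hclass i)
      _ = (D+1) * (m * K ^ D) := by rw [Finset.sum_const, Finset.card_univ,
            Fintype.card_fin, smul_eq_mul]
  have hKD : 0 < K ^ D := Nat.pow_pos hK0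
  have : K * K ^ D ≤ ((D+1) * m) * K ^ D := by
    rw [pow_succ] at htotal
    calc K * K ^ D = K ^ D * K := Nat.mul_comm _ _
      _ ≤ (D+1) * (m * K ^ D) := htotal
      _ = ((D+1) * m) * K ^ D := by ring
  exact Nat.le_of_mul_le_mul_right this hKD

section helpers
variable {e : ℕ} {X : Fin (e+1) → Type}

lemma update_snoc_last (x : ∀ i : Fin e, X i.castSucc) (y₀ y : X (Fin.last e)) :
    Function.update (Fin.snoc x y₀ : ∀ i, X i) (Fin.last e) y = Fin.snoc x y := by
  classical
  funext j
  induction j using Fin.lastCases with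
  | last => rw [Function.update_self, Fin.snoc_last]
  | cast j =>
    rw [Function.update_of_ne (Fin.castSucc_lt_last j).ne, Fin.snoc_castSucc,
      Fin.snoc_castSucc]

lemma update_snoc_castSucc (x : ∀ i : Fin e, X i.castSucc) (y : X (Fin.last e))
    (i₀ : Fin e) (a : X i₀.castSucc) :
    Function.update (Fin.snoc x y : ∀ i, X i) i₀.castSucc a =
      Fin.snoc (Function.update x i₀ a) y := by
  classical
  funext j
  induction j using Fin.lastCases with
  | last =>
    rw [Function.update_of_ne (Fin.castSucc_lt_last i₀).ne', Fin.snoc_last, Fin.snoc_last]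
  | cast j =>
    rw [Fin.snoc_castSucc]
    by_cases hj : j = i₀
    · subst hj
      rw [Function.update_self, Function.update_self]
    · rw [Function.update_of_ne (fun hc => hj (Fin.castSucc_injective e hc)),
        Function.update_of_ne hj, Fin.snoc_castSucc]

end helpers

/-- Main combinatorial step: given a DDF set `Z` in dimension `e+1` and any
"direction selector" `m`, for every `k` there are `k` points of `Z` on a common
line in some direction `i`, all selected to direction `i` by `m`. -/
lemma ddf_line (e : ℕ) (X : Fin (e+1) → Type) (t : ∀ i, TopologicalSpace (X i))
    (U : ∀ i, Set (X i)) (Z : Set (∀ i, X i))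
    (hZ : IsDDF (e+1) X t U Z)
    (hopen : ∀ i, @IsOpen _ (t i) (U i)) (hUne : ∀ i, (U i).Nonempty)
    (hperf : ∀ i, @Perfect _ (t i) (Set.univ : Set (X i)))
    (hT1 : ∀ i, @T1Space _ (t i))
    (m : (∀ i, X i) → Fin (e+1)) (k : ℕ) :
    ∃ (i : Fin (e+1)) (f : ∀ j, X j) (T : Finset (X i)),
      T.card = k ∧
      ∀ x ∈ T, Function.update f i x ∈ Z ∧ m (Function.update f i x) = i := by
  classical
  obtain ⟨h1, h2, h3⟩ := hZ
  by_cases hk0 : k = 0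
  · subst hk0
    exact ⟨Fin.last e, fun i => (hUne i).some, ∅, rfl, by simp⟩
  by_cases hcase : ∃ (x : ∀ i : Fin e, X i.castSucc) (T : Finset (X (Fin.last e))),
      T.card = k ∧ ∀ y ∈ T, Fin.snoc x y ∈ Z ∧ m (Fin.snoc x y) = Fin.last e
  · obtain ⟨x, T, hTcard, hT⟩ := hcase
    refine ⟨Fin.last e, Fin.snoc x ((hUne (Fin.last e)).some), T, hTcard, ?_⟩
    intro y hy
    rw [update_snoc_last]
    exact hT y hy
  · push_neg at hcase
    have hfin : ∀ x : ∀ i : Fin e, X i.castSucc,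
        {y | Fin.snoc x y ∈ Z ∧ m (Fin.snoc x y) = Fin.last e}.Finite := by
      intro x
      rw [← Set.not_infinite]
      intro hinf
      obtain ⟨T, hTsub, hTcard⟩ := hinf.exists_subset_card_eq k
      obtain ⟨y, hyT, hy⟩ := hcase x T hTcard
      exact (hy (hTsub hyT).1) (hTsub hyT).2
    -- rule out e = 0
    by_cases he : e = 0
    · subst he
      exfalso
      have hZ0 : (fun i : Fin 0 => i.elim0) ∈ Fin.init '' Z := by
        obtain ⟨w, hw⟩ := h2
        have : w = (fun i : Fin 0 => i.elim0) := funext fun i => i.elim0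
        rwa [this] at hw
      have hF0 : ↑({(fun i : Fin 0 => i.elim0)} :
          Finset (∀ i : Fin 0, X i.castSucc)) ⊆ Fin.init '' Z := by
        intro x hx
        simp only [Finset.coe_singleton, Set.mem_singleton_iff] at hx
        rwa [hx]
      have hdense := h3 _ hF0
      have hinf := @dense_in_open_infinite _ (t (Fin.last 0)) (hT1 (Fin.last 0))
        (hperf (Fin.last 0)) _ _ (hopen (Fin.last 0)) (hUne (Fin.last 0)) hdense
      obtain ⟨T, hTsub, hTcard⟩ := hinf.exists_subset_card_eq k
      obtain ⟨y, hyT, hy⟩ := hcase (fun i => i.elim0) T hTcard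
      have hySS := hTsub hyT
      simp only [Set.mem_setOf_eq] at hySS
      have hyZ : Fin.snoc (fun i : Fin 0 => i.elim0) y ∈ Z := by
        apply hySS
        exact Finset.mem_singleton_self _
      refine (hy hyZ) ?_
      have h01 : (m (Fin.snoc (fun i : Fin 0 => i.elim0) y)).val = 0 := by
        have := (m (Fin.snoc (fun i : Fin 0 => i.elim0) y)).isLt
        omega
      exact Fin.ext (by simpa using h01)
    obtain ⟨e', rfl⟩ := Nat.exists_eq_succ_of_ne_zero he
    -- set up a large grid
    obtain ⟨K, hKdef⟩ : ∃ K, K = (e'+1) * (k-1) + 1 := ⟨_, rfl⟩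
    have hK0 : 0 < K := by omega
    obtain ⟨C, hCcard, hCgrid⟩ := ddf_grid (e'+1) (fun i => X i.castSucc)
      (fun i => t i.castSucc) (fun i => U i.castSucc) (Fin.init '' Z) h2
      (fun i => hopen i.castSucc) (fun i => hUne i.castSucc)
      (fun i => hperf i.castSucc) (fun i => hT1 i.castSucc) K
    -- enumerate the grid
    have hemb : ∀ i : Fin (e'+1), ∃ g : Fin K → X i.castSucc,
        Function.Injective g ∧ ∀ a, g a ∈ C i := by
      intro i
      refine ⟨fun a => ((C i).equivFin.symm (Fin.cast (hCcard i).symm a)).1, ?_, ?_⟩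
      · intro a b hab
        have h1' := (C i).equivFin.symm.injective (Subtype.ext hab)
        have h2' := congrArg Fin.val h1'
        simp only [Fin.coe_cast] at h2'
        exact Fin.ext h2'
      · intro a
        exact ((C i).equivFin.symm (Fin.cast (hCcard i).symm a)).2
    choose emb hembinj hembC using hemb
    set V : (Fin (e'+1) → Fin K) → (∀ i : Fin (e'+1), X i.castSucc) :=
      fun v i => emb i (v i) with hVdef
    have hVgrid : ∀ v, V v ∈ Fin.init '' Z := fun v => hCgrid (V v) (fun i => hembC i (v i))
    set F : Finset (∀ i : Fin (e'+1), X i.castSucc) := Finset.image V Finset.univ with hFdef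
    have hFsub : ↑F ⊆ Fin.init '' Z := by
      intro x hx
      rw [hFdef, Finset.coe_image] at hx
      obtain ⟨v, -, rfl⟩ := hx
      exact hVgrid v
    have hdense := h3 F hFsub
    have hinfSS := @dense_in_open_infinite _ (t (Fin.last (e'+1))) (hT1 _)
      (hperf _) _ _ (hopen _) (hUne _) hdense
    have hbadfin : (⋃ x ∈ (↑F : Set (∀ i : Fin (e'+1), X i.castSucc)),
        {y | Fin.snoc x y ∈ Z ∧ m (Fin.snoc x y) = Fin.last (e'+1)}).Finite :=
      Set.Finite.biUnion F.finite_toSet (fun x _ => hfin x)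
    obtain ⟨y, hySS, hybad⟩ := (hinfSS.diff hbadfin).nonempty
    have hyZ : ∀ v : Fin (e'+1) → Fin K, Fin.snoc (V v) y ∈ Z := by
      intro v
      exact hySS (V v) (Finset.mem_image_of_mem V (Finset.mem_univ v))
    have hmlast : ∀ v : Fin (e'+1) → Fin K,
        m (Fin.snoc (V v) y) ≠ Fin.last (e'+1) := by
      intro v hlast
      exact hybad (Set.mem_biUnion (Finset.mem_coe.2
        (Finset.mem_image_of_mem V (Finset.mem_univ v))) ⟨hyZ v, hlast⟩)
    have hm' : ∀ v : Fin (e'+1) → Fin K, ∃ j : Fin (e'+1),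
        j.castSucc = m (Fin.snoc (V v) y) :=
      fun v => Fin.exists_castSucc_eq.2 (hmlast v)
    choose φ hφ using hm'
    -- pigeonhole to get a long monochromatic line
    have hPH : ∃ (i₀ : Fin (e'+1)) (u : Fin (e'+1) → Fin K),
        k ≤ (Finset.univ.filter
          (fun a : Fin K => φ (Function.update u i₀ a) = i₀)).card := by
      by_contra hnot
      push_neg at hnot
      have hle : K ≤ (e'+1) * (k-1) := by
        refine pigeonhole_lines hK0 φ (fun i u => ?_)
        have := hnot i u
        omega
      omega
    obtain ⟨i₀, u, hbig⟩ := hPH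
    obtain ⟨T₀, hT₀sub, hT₀card⟩ := Finset.exists_subset_card_eq hbig
    refine ⟨i₀.castSucc, Fin.snoc (V u) y, T₀.image (emb i₀), ?_, ?_⟩
    · rw [Finset.card_image_of_injective _ (hembinj i₀), hT₀card]
    · intro x hx
      obtain ⟨a, haT₀, rfl⟩ := Finset.mem_image.1 hx
      have hkey : Function.update (Fin.snoc (V u) y : ∀ i, X i) i₀.castSucc (emb i₀ a)
          = Fin.snoc (V (Function.update u i₀ a)) y := by
        have harg : Function.update (V u) i₀ (emb i₀ a) = V (Function.update u i₀ a) := by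
          funext j
          by_cases hj : j = i₀
          · subst hj
            simp only [hVdef, Function.update_self]
          · simp only [hVdef, Function.update_of_ne hj]
        rw [update_snoc_castSucc, harg]
      rw [hkey]
      refine ⟨hyZ _, ?_⟩
      have hfilter := hT₀sub haT₀
      rw [Finset.mem_filter] at hfilter
      rw [← hφ (Function.update u i₀ a), hfilter.2]


/-- If `2 ≤ d` and `2^{ℵ₀} ≤ ℵ_{d-1}`, then for every sequence of `d` perfect Polish
spaces there is a coloring `c : ∏ X i → ω` such that every somewhere-DDF set receives
infinitely many colors (the DDF collection is not weakly ω-partition subregular). -/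
theorem stmt9 (d : ℕ) (hd : 2 ≤ d)
    (hc : Cardinal.continuum ≤ Cardinal.aleph (d - 1))
    (X : Fin d → Type) [t : ∀ i, TopologicalSpace (X i)]
    (hPolish : ∀ i, PolishSpace (X i)) (hperf : ∀ i, Perfect (Set.univ : Set (X i)))
    (hne : ∀ i, Nonempty (X i)) :
    ∃ c : (∀ i, X i) → ℕ,
      ∀ Y : Set (∀ i, X i), SomewhereDDF d X (fun i => inferInstance) Y →
        (c '' Y).Infinite := by
  classical
  obtain ⟨n, rfl⟩ : ∃ n, d = n + 1 := ⟨d - 1, by omega⟩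
  have hc2 : Cardinal.continuum ≤ Cardinal.aleph (↑n : Ordinal) := by
    have h1 : ((n : Ordinal) + 1) = 1 + (n : Ordinal) := by
      rw [← Nat.cast_one (R := Ordinal), ← Nat.cast_add, ← Nat.cast_add, Nat.add_comm]
    rwa [Nat.cast_succ, h1, Ordinal.add_sub_cancel] at hc
  have hc' : Cardinal.continuum.{0} ≤ Cardinal.aleph.{0} (↑n : Ordinal) := by
    rw [← Cardinal.lift_le, Cardinal.lift_continuum, Cardinal.lift_aleph,
      Ordinal.lift_natCast]
    exact hc2
  have hcard : ∀ i, #(Set.univ : Set (X i)) ≤ Cardinal.aleph (↑n : Ordinal) := by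
    intro i
    haveI := hPolish i
    rw [Cardinal.mk_univ]
    exact le_trans (mk_le_continuum_of_secondCountable (X i)) hc'
  obtain ⟨A, hAcov, hAsec⟩ := kuratowski n X (fun _ => Set.univ) hcard
  have hm : ∀ p : ∀ i, X i, ∃ i, p ∈ A i := fun p => hAcov p (fun i => Set.mem_univ _)
  choose mfun hmfun using hm
  have hsec : ∀ (i : Fin (n+1)) (f : ∀ j, X j), ∃ g : X i → ℕ,
      Set.InjOn g {t | Function.update f i t ∈ A i} :=
    fun i f => exists_injOn_nat (hAsec i f)
  choose enc hencinj using hsec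
  set cfun : Fin (n+1) → (∀ i, X i) → ℕ := fun j p =>
    Nat.pair j.val (enc j (Function.update p j (Classical.arbitrary (X j))) (p j))
    with hcfun
  refine ⟨fun p => cfun (mfun p) p, ?_⟩
  intro Y hY
  obtain ⟨U, hopen, hUne, hDDF⟩ := hY
  have hT1 : ∀ i, @T1Space _ (t i) := fun i => by haveI := hPolish i; infer_instance
  apply infinite_of_forall_finset
  intro k
  obtain ⟨i, f, T, hTcard, hT⟩ := ddf_line n X (fun i => inferInstance) U Y hDDF
    hopen hUne hperf hT1 mfun k
  -- the values of the coloring on the selected line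
  have hval : ∀ x ∈ T, cfun (mfun (Function.update f i x)) (Function.update f i x)
      = Nat.pair i.val (enc i (Function.update f i (Classical.arbitrary (X i))) x) := by
    intro x hx
    have hmq : mfun (Function.update f i x) = i := (hT x hx).2
    rw [hmq, hcfun]
    simp only [Function.update_idem, Function.update_self]
  have hmemA : ∀ x ∈ T, x ∈ {u : X i |
      Function.update (Function.update f i (Classical.arbitrary (X i))) i u ∈ A i} := by
    intro x hx
    have hq := hmfun (Function.update f i x)
    rw [(hT x hx).2] at hq
    simpa only [Set.mem_setOf_eq, Function.update_idem] using hq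
  refine ⟨T.image (fun x =>
    Nat.pair i.val (enc i (Function.update f i (Classical.arbitrary (X i))) x)), ?_, ?_⟩
  · intro v hv
    rw [Finset.coe_image] at hv
    obtain ⟨x, hx, rfl⟩ := hv
    exact ⟨Function.update f i x, (hT x hx).1, hval x hx⟩
  · rw [Finset.card_image_of_injOn, hTcard]
    intro x hx y hy hxy
    simp only [Finset.mem_coe] at hx hy
    have h1 := (Nat.pair_eq_pair.1 hxy).2
    exact hencinj i (Function.update f i (Classical.arbitrary (X i)))
      (hmemA x hx) (hmemA y hy) h1
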